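/- For real numbers λ₁, λ₂ > 0, a positive integer l, integers m₁, n₁, ..., m_l, n_l, and a complex number s with large enough real part, the Mellin transform of the iterated integral I(t) = ∫_{γ(t)} ω₁⋯ω_l of the monomial forms ω_i = x^{m_i - 1} y^{n_i} dx over the arc γ(t) = {x^{λ₁} y^{λ₂} = t} ∩ {0 ≤ x, y ≤ 1} (parameterized by x increasing from t^{1/λ₁} to 1, with y = (t/x^{λ₁})^{1/λ₂}) equals λ₁^{-l} · ∏_{j=0}^{l} ( s + λ₁^{-1} ∑_{i=1}^{j} m_i + λ₂^{-1} ∑_{i=j+1}^{l} n_i )^{-1}. -/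

import Mathlib

open MeasureTheory intervalIntegral
open Set Topology

/-- Iterated integral `∫_a^b g₁(x₁) ∫_{x₁}^b g₂(x₂) ⋯ ∫_{x_{l-1}}^b g_l(x_l) dx_l ⋯ dx₁`. -/
noncomputable def iterInt : List (ℝ → ℝ) → ℝ → ℝ → ℝ
  | [], _, _ => 1
  | g :: gs, a, b => ∫ x in a..b, g x * iterInt gs x b

lemma iterInt_congr {b : ℝ} {a0 : ℝ} : ∀ {gs hs : List (ℝ → ℝ)},
    List.Forall₂ (fun g h => Set.EqOn g h (Set.Icc a0 b)) gs hs →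
    ∀ a ∈ Set.Icc a0 b, iterInt gs a b = iterInt hs a b := by
  intro gs hs h
  induction h with
  | nil => intro a _; rfl
  | cons hgh htl ih =>
    intro a ha
    show (∫ x in a..b, _ * iterInt _ x b) = ∫ x in a..b, _ * iterInt _ x b
    apply intervalIntegral.integral_congr
    intro x hx
    have hx' : x ∈ Set.Icc a0 b := by
      rw [Set.uIcc_of_le ha.2] at hx
      exact ⟨le_trans ha.1 hx.1, hx.2⟩
    simp only
    rw [hgh hx', ih x hx']

lemma iterInt_map_const_mul : ∀ (ps : List (ℝ × (ℝ → ℝ))) (a b : ℝ),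
    iterInt (ps.map fun p => fun x => p.1 * p.2 x) a b
      = (ps.map Prod.fst).prod * iterInt (ps.map Prod.snd) a b := by
  intro ps
  induction ps with
  | nil => intro a b; simp [iterInt]
  | cons p ps ih =>
    intro a b
    show (∫ x in a..b, (p.1 * p.2 x) * iterInt _ x b) = _
    simp only [ih]
    have : ∀ x : ℝ, p.1 * p.2 x * ((ps.map Prod.fst).prod * iterInt (ps.map Prod.snd) x b)
        = (p.1 * (ps.map Prod.fst).prod) * (p.2 x * iterInt (ps.map Prod.snd) x b) :=
      fun x => by ring
    simp only [this, intervalIntegral.integral_const_mul]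
    show _ = (p.1 * (ps.map Prod.fst).prod) * ∫ x in a..b, p.2 x * iterInt (ps.map Prod.snd) x b
    rfl


noncomputable def powList (ds : List ℝ) : List (ℝ → ℝ) := ds.map fun d => fun x => x ^ d

noncomputable def Jfun (ds : List ℝ) (u : ℝ) : ℝ := iterInt (powList ds) u 1

lemma Jfun_nil (u : ℝ) : Jfun [] u = 1 := rfl

lemma Jfun_cons (d : ℝ) (ds : List ℝ) (u : ℝ) :
    Jfun (d :: ds) u = ∫ y in u..1, y ^ d * Jfun ds y := rfl

lemma uIcc_subset_Ioi {x y : ℝ} (hx : 0 < x) (hy : 0 < y) : Set.uIcc x y ⊆ Set.Ioi 0 := by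
  intro z hz
  exact lt_of_lt_of_le (lt_min hx hy) hz.1

lemma contOn_rpow (d : ℝ) : ContinuousOn (fun y : ℝ => y ^ d) (Set.Ioi 0) :=
  fun y hy => (Real.continuousAt_rpow_const y d (Or.inl (ne_of_gt hy))).continuousWithinAt

lemma contOn_Jfun : ∀ ds : List ℝ, ContinuousOn (Jfun ds) (Set.Ioi 0) := by
  intro ds
  induction ds with
  | nil => exact continuousOn_const
  | cons d ds ih =>
    have hf : ContinuousOn (fun y : ℝ => y ^ d * Jfun ds y) (Set.Ioi 0) :=
      (contOn_rpow d).mul ih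
    intro x0 hx0
    have hca : ContinuousAt (Jfun (d :: ds)) x0 := by
      have hder := intervalIntegral.integral_hasDerivAt_left
        (f := fun y : ℝ => y ^ d * Jfun ds y) (a := x0) (b := 1)
        ((hf.mono (uIcc_subset_Ioi hx0 one_pos)).intervalIntegrable)
        (hf.stronglyMeasurableAtFilter isOpen_Ioi x0 hx0)
        (hf.continuousAt (isOpen_Ioi.mem_nhds hx0))
      exact hder.continuousAt
    exact hca.continuousWithinAt

lemma contOn_integrand (d : ℝ) (ds : List ℝ) :
    ContinuousOn (fun y : ℝ => y ^ d * Jfun ds y) (Set.Ioi 0) :=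
  (contOn_rpow d).mul (contOn_Jfun ds)

lemma intervalIntegrable_integrand (d : ℝ) (ds : List ℝ) {x y : ℝ} (hx : 0 < x) (hy : 0 < y) :
    IntervalIntegrable (fun z : ℝ => z ^ d * Jfun ds z) volume x y :=
  ((contOn_integrand d ds).mono (uIcc_subset_Ioi hx hy)).intervalIntegrable

lemma intervalIntegrable_rpow_pos (d : ℝ) {x y : ℝ} (hx : 0 < x) (hy : 0 < y) :
    IntervalIntegrable (fun z : ℝ => z ^ d) volume x y :=
  ((contOn_rpow d).mono (uIcc_subset_Ioi hx hy)).intervalIntegrable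

lemma bound_Jfun : ∀ ds : List ℝ, ∃ C : ℝ, 0 < C ∧ ∃ A : ℝ, 1 ≤ A ∧
    ∀ x ∈ Set.Ioc (0:ℝ) 1, |Jfun ds x| ≤ C * x ^ (-A) := by
  intro ds
  induction ds with
  | nil =>
    refine ⟨1, one_pos, 1, le_refl 1, ?_⟩
    intro x hx
    rw [Jfun_nil, abs_one, one_mul, Real.rpow_neg hx.1.le, Real.rpow_one]
    exact (one_le_inv₀ hx.1).mpr hx.2
  | cons d ds ih =>
    obtain ⟨C, hC, A, hA, hbd⟩ := ih
    set B : ℝ := A + |d| with hB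
    have habs := abs_nonneg d
    have hB1 : 1 ≤ B := by simp only [hB]; linarith
    refine ⟨C, hC, B, hB1, ?_⟩
    intro x hx
    have hx0 : (0:ℝ) < x := hx.1
    have hxB : 1 ≤ x ^ (-B) := by
      have := Real.rpow_le_rpow_of_exponent_ge hx0 hx.2 (by linarith : -B ≤ 0)
      rwa [Real.rpow_zero] at this
    set E : ℝ := B + 1 with hE
    have key : |Jfun (d :: ds) x| ≤ ∫ y in x..1, C * y ^ (-E) := by
      rw [Jfun_cons]
      refine (intervalIntegral.abs_integral_le_integral_abs hx.2).trans
        (intervalIntegral.integral_mono_on hx.2 ?_ ?_ ?_)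
      · exact (intervalIntegrable_integrand d ds hx.1 one_pos).abs
      · exact (intervalIntegrable_rpow_pos (-E) hx.1 one_pos).const_mul C
      · intro y hy
        have hy0 : 0 < y := lt_of_lt_of_le hx.1 hy.1
        rw [abs_mul, abs_of_nonneg (Real.rpow_nonneg hy0.le d)]
        calc y ^ d * |Jfun ds y| ≤ y ^ d * (C * y ^ (-A)) :=
              mul_le_mul_of_nonneg_left (hbd y ⟨hy0, hy.2⟩) (Real.rpow_nonneg hy0.le d)
          _ = C * (y ^ d * y ^ (-A)) := by ring
          _ = C * y ^ (d + -A) := by rw [← Real.rpow_add hy0]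
          _ ≤ C * y ^ (-E) := by
              apply mul_le_mul_of_nonneg_left _ hC.le
              apply Real.rpow_le_rpow_of_exponent_ge hy0 hy.2
              have := neg_abs_le d
              simp only [hE, hB]
              linarith
    refine key.trans ?_
    rw [intervalIntegral.integral_const_mul, integral_rpow (Or.inr ⟨?_, ?_⟩)]
    · rw [Real.one_rpow, show -E + 1 = -B by simp only [hE]; ring]
      rw [div_eq_mul_inv, ← mul_assoc]
      have h2 : (1 - x ^ (-B)) * (-B)⁻¹ ≤ x ^ (-B) := by
        rw [show (1 - x ^ (-B)) * (-B)⁻¹ = (x ^ (-B) - 1) * B⁻¹ by rw [inv_neg]; ring]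
        rw [← div_eq_mul_inv, div_le_iff₀ (by linarith : (0:ℝ) < B)]
        nlinarith
      calc C * (1 - x ^ (-B)) * (-B)⁻¹ = C * ((1 - x ^ (-B)) * (-B)⁻¹) := by ring
        _ ≤ C * x ^ (-B) := mul_le_mul_of_nonneg_left h2 hC.le
    · intro h; rw [neg_eq_iff_eq_neg] at h; simp only [hE, hB] at h; linarith [h]
    · intro h0
      rcases Set.mem_uIcc.1 h0 with h | h
      · exact absurd h.1 (not_le.2 hx.1)
      · exact absurd h.1 (not_le.2 one_pos)

open Filter in
lemma contOn_cpow_Jfun (ds : List ℝ) (w : ℂ) :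
    ContinuousOn (fun u : ℝ => (u:ℂ) ^ (w - 1) * (Jfun ds u : ℂ)) (Set.Ioi 0) := by
  intro u hu
  apply ContinuousWithinAt.mul
  · refine (ContinuousAt.cpow Complex.continuous_ofReal.continuousAt continuousAt_const
      ?_).continuousWithinAt
    rw [Complex.mem_slitPlane_iff]
    exact Or.inl (by simpa using hu)
  · exact Complex.continuous_ofReal.continuousAt.comp_continuousWithinAt ((contOn_Jfun ds) u hu)

lemma integrableOn_cpow_Jfun (ds : List ℝ) (w : ℂ) {C A : ℝ} (hC : 0 < C)
    (hbd : ∀ x ∈ Set.Ioc (0:ℝ) 1, |Jfun ds x| ≤ C * x ^ (-A)) (hw : A < w.re) :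
    IntegrableOn (fun u : ℝ => (u:ℂ) ^ (w - 1) * (Jfun ds u : ℂ)) (Set.Ioo 0 1) := by
  have hmeas : AEStronglyMeasurable (fun u : ℝ => (u:ℂ) ^ (w - 1) * (Jfun ds u : ℂ))
      (volume.restrict (Set.Ioo 0 1)) :=
    ((contOn_cpow_Jfun ds w).mono (fun x hx => hx.1)).aestronglyMeasurable
      measurableSet_Ioo
  have hdom : IntegrableOn (fun u : ℝ => C * u ^ (w.re - 1 - A)) (Set.Ioo 0 1) := by
    have h := (intervalIntegrable_rpow' (a := 0) (b := 1) (r := w.re - 1 - A) (by linarith)).1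
    exact (h.mono_set Set.Ioo_subset_Ioc_self).const_mul C
  refine Integrable.mono' hdom hmeas ?_
  rw [ae_restrict_iff' measurableSet_Ioo]
  refine ae_of_all _ ?_
  intro u hu
  rw [norm_mul,
    Complex.norm_cpow_eq_rpow_re_of_pos hu.1, Complex.norm_real, Real.norm_eq_abs,
    show (w - 1).re = w.re - 1 from by simp]
  calc u ^ (w.re - 1) * |Jfun ds u| ≤ u ^ (w.re - 1) * (C * u ^ (-A)) :=
        mul_le_mul_of_nonneg_left (hbd u ⟨hu.1, hu.2.le⟩) (Real.rpow_nonneg hu.1.le _)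
    _ = C * (u ^ (w.re - 1) * u ^ (-A)) := by ring
    _ = C * u ^ (w.re - 1 - A) := by
        rw [← Real.rpow_add hu.1, show w.re - 1 + -A = w.re - 1 - A from by ring]

open Filter in
lemma mellinJ : ∀ ds : List ℝ, ∃ W : ℝ, ∀ w : ℂ, W < w.re →
    (∫ u in Set.Ioo (0:ℝ) 1, (u:ℂ) ^ (w - 1) * (Jfun ds u : ℂ))
      = ∏ j ∈ Finset.range (ds.length + 1), (w + (((ds.take j).sum + j : ℝ) : ℂ))⁻¹ := by
  intro ds
  induction ds with
  | nil =>
    refine ⟨1, fun w hw => ?_⟩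
    have hw0 : (0:ℝ) < w.re := lt_trans zero_lt_one hw
    have hwne : w ≠ 0 := fun h => by rw [h] at hw0; simp at hw0
    simp only [Jfun_nil, Complex.ofReal_one, mul_one, List.length_nil, zero_add,
      Finset.prod_range_one, List.take_nil, List.sum_nil, Nat.cast_zero, add_zero,
      Complex.ofReal_zero]
    rw [← integral_Ioc_eq_integral_Ioo, ← intervalIntegral.integral_of_le zero_le_one,
      integral_cpow (Or.inl (by simpa using hw0))]
    simp [hwne, Complex.zero_cpow (show w - 1 + 1 ≠ 0 from by simpa using hwne)]
  | cons d ds ih =>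
    obtain ⟨W', hIH⟩ := ih
    obtain ⟨C, hC, A, hA, hbd⟩ := bound_Jfun ds
    obtain ⟨C', hC', A', hA', hbd'⟩ := bound_Jfun (d :: ds)
    refine ⟨max (max 1 A') (max (A - d - 1) (W' - d - 1)), fun w hw => ?_⟩
    have hw1 : 1 < w.re := ((le_max_left 1 A').trans (le_max_left _ _)).trans_lt hw
    have hwA' : A' < w.re := ((le_max_right 1 A').trans (le_max_left _ _)).trans_lt hw
    have hwA : A < w.re + d + 1 := by
      have := ((le_max_left (A-d-1) (W'-d-1)).trans (le_max_right _ _)).trans_lt hw; linarith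
    have hwW' : W' < w.re + d + 1 := by
      have := ((le_max_right (A-d-1) (W'-d-1)).trans (le_max_right _ _)).trans_lt hw; linarith
    have hw0 : (0:ℝ) < w.re := by linarith
    have hwne : w ≠ 0 := fun h => by rw [h] at hw0; simp at hw0
    have hre : (w + (d:ℂ) + 1).re = w.re + d + 1 := by simp
    set G1 : ℝ → ℂ := fun u => (u:ℂ) ^ (w - 1) * (Jfun (d :: ds) u : ℂ) with hG1
    set G2 : ℝ → ℂ := fun u => (u:ℂ) ^ (w + d + 1 - 1) * (Jfun ds u : ℂ) with hG2
    set Φ : ℝ → ℂ := fun u => (u:ℂ) ^ w / w * (Jfun (d :: ds) u : ℂ) with hΦ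
    have hint1 : IntegrableOn G1 (Set.Ioo 0 1) := integrableOn_cpow_Jfun _ w hC' hbd' hwA'
    have hint2 : IntegrableOn G2 (Set.Ioo 0 1) :=
      integrableOn_cpow_Jfun _ (w + d + 1) hC hbd (by rw [hre]; exact hwA)
    have hderiv : ∀ u ∈ Set.Ioi (0:ℝ), HasDerivAt Φ (G1 u - w⁻¹ * G2 u) u := by
      intro u hu
      have hune : u ≠ 0 := ne_of_gt hu
      have h1 : HasDerivAt (fun y : ℝ => (y:ℂ) ^ w / w) ((u:ℂ) ^ (w - 1)) u := by
        have h := hasDerivAt_ofReal_cpow_const' hune (r := w - 1)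
          (by intro h; apply hwne; linear_combination h)
        have heq : w - 1 + 1 = w := by ring
        rw [heq] at h
        exact h
      have hJd : HasDerivAt (Jfun (d :: ds)) (-(u ^ d * Jfun ds u)) u :=
        intervalIntegral.integral_hasDerivAt_left
          (intervalIntegrable_integrand d ds hu one_pos)
          ((contOn_integrand d ds).stronglyMeasurableAtFilter isOpen_Ioi u hu)
          ((contOn_integrand d ds).continuousAt (isOpen_Ioi.mem_nhds hu))
      have h2 : HasDerivAt (fun y : ℝ => (Jfun (d :: ds) y : ℂ))
          ((-(u ^ d * Jfun ds u) : ℝ) : ℂ) u := hJd.ofReal_comp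
      have hprod := h1.mul h2
      refine hprod.congr_deriv ?_
      rw [hG1, hG2]
      simp only
      push_cast
      rw [Complex.ofReal_cpow hu.le d,
        show w + (d:ℂ) + 1 - 1 = w + d from by ring,
        Complex.cpow_add _ _ (Complex.ofReal_ne_zero.2 hune)]
      field_simp
      ring
    have hint : IntervalIntegrable (fun u => G1 u - w⁻¹ * G2 u) volume 0 1 := by
      rw [intervalIntegrable_iff_integrableOn_Ioc_of_le zero_le_one]
      have hsub : IntegrableOn (fun u => G1 u - w⁻¹ * G2 u) (Set.Ioo 0 1) :=
        hint1.sub (hint2.const_mul _)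
      exact hsub.congr_set_ae Ioo_ae_eq_Ioc.symm
    have hzero : Tendsto Φ (𝓝[>] (0:ℝ)) (𝓝 0) := by
      apply squeeze_zero_norm' (a := fun u : ℝ => C' / ‖w‖ * u ^ (w.re - A'))
      · filter_upwards [Ioc_mem_nhdsGT_of_mem (Set.mem_Ico.2 ⟨le_refl (0:ℝ), zero_lt_one⟩)]
          with u hu
        rw [hΦ]; simp only
        rw [norm_mul, norm_div,
          Complex.norm_cpow_eq_rpow_re_of_pos hu.1, Complex.norm_real, Real.norm_eq_abs]
        calc u ^ w.re / ‖w‖ * |Jfun (d::ds) u|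
            ≤ u ^ w.re / ‖w‖ * (C' * u ^ (-A')) :=
              mul_le_mul_of_nonneg_left (hbd' u hu)
                (div_nonneg (Real.rpow_nonneg hu.1.le _) (norm_nonneg w))
          _ = C' / ‖w‖ * (u ^ w.re * u ^ (-A')) := by ring
          _ = C' / ‖w‖ * u ^ (w.re - A') := by
              rw [← Real.rpow_add hu.1, sub_eq_add_neg]
      · have hc : ContinuousAt (fun u : ℝ => u ^ (w.re - A')) 0 :=
          Real.continuousAt_rpow_const 0 _ (Or.inr (by linarith))
        have h0 := hc.tendsto
        rw [Real.zero_rpow (by linarith : w.re - A' ≠ 0)] at h0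
        have := (h0.mono_left (nhdsWithin_le_nhds (s := Set.Ioi (0:ℝ)))).const_mul
          (C' / ‖w‖)
        simpa using this
    have hone : Tendsto Φ (𝓝[<] (1:ℝ)) (𝓝 0) := by
      have hc : ContinuousAt Φ 1 :=
        (hderiv 1 (Set.mem_Ioi.2 zero_lt_one)).continuousAt
      have h10 : Φ 1 = 0 := by
        rw [hΦ]; simp only
        rw [Jfun_cons, intervalIntegral.integral_same]
        simp
      have := hc.tendsto
      rw [h10] at this
      exact this.mono_left nhdsWithin_le_nhds
    have h0 := intervalIntegral.integral_eq_sub_of_hasDerivAt_of_tendsto zero_lt_one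
      (fun x hx => hderiv x hx.1) hint hzero hone
    rw [intervalIntegral.integral_of_le zero_le_one, integral_Ioc_eq_integral_Ioo, sub_zero] at h0
    have hsplit : ∫ u in Set.Ioo (0:ℝ) 1, (G1 u - w⁻¹ * G2 u)
        = (∫ u in Set.Ioo (0:ℝ) 1, G1 u) - w⁻¹ * ∫ u in Set.Ioo (0:ℝ) 1, G2 u := by
      rw [MeasureTheory.integral_sub hint1 (hint2.const_mul _), MeasureTheory.integral_const_mul]
    have hG1val : (∫ u in Set.Ioo (0:ℝ) 1, G1 u) = w⁻¹ * ∫ u in Set.Ioo (0:ℝ) 1, G2 u := by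
      have h := hsplit.symm.trans h0
      linear_combination h
    show (∫ u in Set.Ioo (0:ℝ) 1, G1 u) = _
    rw [hG1val, show ∫ u in Set.Ioo (0:ℝ) 1, G2 u
        = ∫ u in Set.Ioo (0:ℝ) 1, (u:ℂ) ^ ((w + d + 1) - 1) * (Jfun ds u : ℂ) from rfl,
      hIH (w + d + 1) (by rw [hre]; exact hwW'), List.length_cons]
    conv_rhs => rw [Finset.prod_range_succ']
    rw [mul_comm]
    congr 1
    · apply Finset.prod_congr rfl
      intro j hj
      congr 1
      rw [List.take_succ_cons, List.sum_cons]
      push_cast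
      ring
    · simp

lemma ofReal_rpow_cpow {u : ℝ} (hu : 0 < u) (p : ℝ) (z : ℂ) :
    ((u ^ p : ℝ) : ℂ) ^ z = (u:ℂ) ^ ((p:ℂ) * z) := by
  rw [Complex.cpow_def_of_ne_zero
      (by exact_mod_cast (Real.rpow_pos_of_pos hu p).ne' : ((u ^ p : ℝ) : ℂ) ≠ 0),
    Complex.cpow_def_of_ne_zero (by exact_mod_cast hu.ne' : ((u:ℝ):ℂ) ≠ 0),
    ← Complex.ofReal_log (Real.rpow_pos_of_pos hu p).le,
    ← Complex.ofReal_log hu.le, Real.log_rpow hu]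
  congr 1
  push_cast
  ring

/-- The Mellin transform of the elementary iterated integral of the monomial forms
`ωᵢ = x^{mᵢ−1} y^{nᵢ} dx` over `γ(t) = {x^{λ₁} y^{λ₂} = t} ∩ {0 ≤ x, y ≤ 1}`
equals `λ₁^{-l} ∏_{j=0}^{l} (s + λ₁⁻¹ ∑_{i≤j} mᵢ + λ₂⁻¹ ∑_{i>j} nᵢ)⁻¹` for `s`
of sufficiently large real part. -/
theorem mellin_elementary_iterated_integral (lam1 lam2 : ℝ) (h1 : 0 < lam1) (h2 : 0 < lam2)
    (l : ℕ) (hl : 0 < l) (m n : ℕ → ℤ) (I : ℝ → ℝ)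
    (hI : ∀ t ∈ Set.Ioo (0:ℝ) 1, I t =
      iterInt
        (List.ofFn fun i : Fin l => fun x : ℝ =>
          x ^ ((m i : ℝ) - 1) * (t / x ^ lam1) ^ ((n i : ℝ) / lam2))
        (t ^ (1 / lam1)) 1) :
    ∃ R : ℝ, ∀ s : ℂ, R < s.re →
      ∫ t in Set.Ioo (0:ℝ) 1, (t : ℂ) ^ (s - 1) * (I t : ℂ)
        = ((lam1 : ℂ))⁻¹ ^ l *
            ∏ j ∈ Finset.range (l + 1),
              (s + ((lam1⁻¹ * ∑ i ∈ Finset.range j, (m i : ℝ)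
                + lam2⁻¹ * ∑ i ∈ Finset.Ico j l, (n i : ℝ) : ℝ) : ℂ))⁻¹ := by
  set c : ℕ → ℝ := fun i => (n i : ℝ) / lam2 with hc
  set dd : ℕ → ℝ := fun i => (m i : ℝ) - 1 - lam1 * c i with hdd
  set ds : List ℝ := (List.range l).map dd with hds
  obtain ⟨W, hW⟩ := mellinJ ds
  set σ : ℝ := ∑ i ∈ Finset.range l, c i with hσ
  refine ⟨|W| / lam1 - σ, fun s hs => ?_⟩
  set w : ℂ := (lam1:ℂ) * (s + (σ:ℂ)) with hw
  have hwre : W < w.re := by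
    have hre : w.re = lam1 * (s.re + σ) := by
      rw [hw]; simp [Complex.mul_re]
    rw [hre]
    have hle : |W|/lam1 < s.re + σ := by linarith
    calc W ≤ |W| := le_abs_self W
      _ = lam1 * (|W|/lam1) := by field_simp
      _ < lam1 * (s.re + σ) := by exact mul_lt_mul_of_pos_left hle h1
  -- Step A : rewrite the integrand on Ioo 0 1
  have stepA : Set.EqOn (fun t : ℝ => (t:ℂ) ^ (s-1) * (I t : ℂ))
      (fun t : ℝ => (t:ℂ) ^ ((s + (σ:ℂ)) - 1) * (Jfun ds (t ^ (1/lam1)) : ℂ))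
      (Set.Ioo (0:ℝ) 1) := by
    intro t ht
    have ht0 : (0:ℝ) < t := ht.1
    set a : ℝ := t ^ (1/lam1) with ha
    have ha0 : 0 < a := Real.rpow_pos_of_pos ht0 _
    have ha1 : a ≤ 1 := (Real.rpow_lt_one ht0.le ht.2 (by positivity)).le
    -- the list of pairs
    set ps : List (ℝ × (ℝ → ℝ)) :=
      (List.range l).map (fun i => (t ^ c i, fun x : ℝ => x ^ dd i)) with hps
    have hlist : iterInt
        (List.ofFn fun i : Fin l => fun x : ℝ =>
          x ^ ((m i : ℝ) - 1) * (t / x ^ lam1) ^ ((n i : ℝ) / lam2)) a 1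
        = iterInt (ps.map fun p => fun x => p.1 * p.2 x) a 1 := by
      have hofn : (List.ofFn fun i : Fin l => fun x : ℝ =>
          x ^ ((m i : ℝ) - 1) * (t / x ^ lam1) ^ ((n i : ℝ) / lam2))
          = (List.range l).map (fun i => fun x : ℝ =>
              x ^ ((m i : ℝ) - 1) * (t / x ^ lam1) ^ ((n i : ℝ) / lam2)) := by
        rw [List.ofFn_eq_map, ← List.map_coe_finRange_eq_range (n := l), List.map_map]
        rfl
      rw [hofn, hps, List.map_map]
      refine iterInt_congr ?_ a ⟨le_refl a, ha1⟩
      rw [List.forall₂_map_right_iff, List.forall₂_map_left_iff]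
      refine List.forall₂_same.2 ?_
      intro i _ x hx
      have hx0 : 0 < x := lt_of_lt_of_le ha0 hx.1
      show x ^ ((m i : ℝ) - 1) * (t / x ^ lam1) ^ ((n i : ℝ) / lam2) = t ^ c i * x ^ dd i
      rw [show (n i : ℝ) / lam2 = c i from rfl]
      rw [Real.div_rpow ht0.le (Real.rpow_nonneg hx0.le lam1) (c i),
        ← Real.rpow_mul hx0.le lam1 (c i), div_eq_mul_inv, ← Real.rpow_neg hx0.le]
      rw [show x ^ ((m i : ℝ) - 1) * (t ^ c i * x ^ (-(lam1 * c i)))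
          = t ^ c i * (x ^ ((m i : ℝ) - 1) * x ^ (-(lam1 * c i))) from by ring,
        ← Real.rpow_add hx0, hdd]
      congr 2
    have hIt : I t = t ^ σ * Jfun ds a := by
      rw [hI t ht, ← ha, hlist, iterInt_map_const_mul, hps]
      congr 1
      · rw [List.map_map]
        have : ((List.range l).map fun i => t ^ c i).prod = ∏ i ∈ Finset.range l, t ^ c i := rfl
        rw [show (Prod.fst ∘ fun i => (t ^ c i, fun x : ℝ => x ^ dd i)) = fun i => t ^ c i
          from rfl, this, ← Real.rpow_sum_of_pos ht0]
      · rw [List.map_map]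
        show iterInt ((List.range l).map fun i => fun x : ℝ => x ^ dd i) a 1
          = iterInt (((List.range l).map dd).map fun d => fun x : ℝ => x ^ d) a 1
        rw [List.map_map]
        simp only [Function.comp_def]
    simp only
    rw [hIt]
    push_cast
    rw [Complex.ofReal_cpow ht0.le σ]
    rw [show (s + (σ:ℂ)) - 1 = (s - 1) + (σ:ℂ) from by ring,
      Complex.cpow_add _ _ (Complex.ofReal_ne_zero.2 ht0.ne')]
    ring
  rw [MeasureTheory.setIntegral_congr_fun measurableSet_Ioo stepA]
  -- Step B : substitution t = u ^ lam1
  have himg : (fun u : ℝ => u ^ lam1) '' (Set.Ioo 0 1) = Set.Ioo 0 1 := by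
    ext t
    constructor
    · rintro ⟨u, hu, rfl⟩
      exact ⟨Real.rpow_pos_of_pos hu.1 _, Real.rpow_lt_one hu.1.le hu.2 h1⟩
    · intro ht
      refine ⟨t ^ (1/lam1), ⟨Real.rpow_pos_of_pos ht.1 _,
        Real.rpow_lt_one ht.1.le ht.2 (by positivity)⟩, ?_⟩
      show (t ^ (1/lam1)) ^ lam1 = t
      rw [← Real.rpow_mul ht.1.le, one_div, inv_mul_cancel₀ h1.ne', Real.rpow_one]
  have hsub := MeasureTheory.integral_image_eq_integral_abs_deriv_smul
    (s := Set.Ioo (0:ℝ) 1) measurableSet_Ioo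
    (f := fun u : ℝ => u ^ lam1) (f' := fun u : ℝ => lam1 * u ^ (lam1 - 1))
    (fun x hx => (Real.hasDerivAt_rpow_const (Or.inl hx.1.ne')).hasDerivWithinAt)
    (fun x hx y hy hxy => by
      rcases lt_trichotomy x y with h | h | h
      · exact absurd hxy (ne_of_lt (Real.rpow_lt_rpow hx.1.le h h1))
      · exact h
      · exact absurd hxy.symm (ne_of_lt (Real.rpow_lt_rpow hy.1.le h h1)))
    (fun t => (t:ℂ) ^ ((s + (σ:ℂ)) - 1) * (Jfun ds (t ^ (1/lam1)) : ℂ))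
  rw [himg] at hsub
  rw [hsub]
  -- simplify the substituted integrand
  have stepB : Set.EqOn
      (fun u : ℝ => |lam1 * u ^ (lam1 - 1)| •
        (((u ^ lam1 : ℝ):ℂ) ^ ((s + (σ:ℂ)) - 1) * (Jfun ds ((u ^ lam1) ^ (1/lam1)) : ℂ)))
      (fun u : ℝ => (lam1:ℂ) * ((u:ℂ) ^ (w - 1) * (Jfun ds u : ℂ)))
      (Set.Ioo (0:ℝ) 1) := by
    intro u hu
    have hu0 : 0 < u := hu.1
    simp only
    rw [show (u ^ lam1) ^ (1/lam1) = u from by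
      rw [← Real.rpow_mul hu0.le, one_div, mul_inv_cancel₀ h1.ne', Real.rpow_one]]
    rw [abs_of_pos (by positivity : 0 < lam1 * u ^ (lam1 - 1)), Complex.real_smul]
    rw [ofReal_rpow_cpow hu0 lam1 _]
    push_cast
    rw [Complex.ofReal_cpow hu0.le (lam1 - 1)]
    rw [mul_assoc, ← mul_assoc ((u:ℂ) ^ ((lam1 - 1 : ℝ):ℂ)) _ _,
      ← Complex.cpow_add _ _ (Complex.ofReal_ne_zero.2 hu0.ne')]
    rw [hw]
    push_cast
    rw [show ((lam1:ℂ) - 1) + (lam1:ℂ) * (s + (σ:ℂ) - 1) = (lam1:ℂ) * (s + (σ:ℂ)) - 1 from by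
      ring]
  rw [MeasureTheory.setIntegral_congr_fun measurableSet_Ioo stepB, MeasureTheory.integral_const_mul,
    hW w hwre]
  -- Step C : final algebra on the product
  have hlen : ds.length = l := by rw [hds]; simp
  rw [hlen]
  have hfac : ∀ j ∈ Finset.range (l + 1),
      (w + (((ds.take j).sum + j : ℝ) : ℂ))⁻¹
        = (lam1:ℂ)⁻¹ * (s + ((lam1⁻¹ * ∑ i ∈ Finset.range j, (m i : ℝ)
            + lam2⁻¹ * ∑ i ∈ Finset.Ico j l, (n i : ℝ) : ℝ) : ℂ))⁻¹ := by
    intro j hj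
    have hjl : j ≤ l := Nat.lt_succ_iff.1 (Finset.mem_range.1 hj)
    have htake : (ds.take j).sum = ∑ i ∈ Finset.range j, dd i := by
      rw [hds, ← List.map_take, List.take_range, min_eq_left hjl]
      rfl
    have hsum : ∑ i ∈ Finset.range j, (n i:ℝ) + ∑ i ∈ Finset.Ico j l, (n i:ℝ)
        = ∑ i ∈ Finset.range l, (n i:ℝ) := Finset.sum_range_add_sum_Ico _ hjl
    have hddsum : ∑ i ∈ Finset.range j, dd i
        = (∑ i ∈ Finset.range j, (m i:ℝ)) - j - (lam1/lam2) * ∑ i ∈ Finset.range j, (n i:ℝ) := by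
      rw [hdd]
      simp only [hc]
      rw [Finset.sum_sub_distrib, Finset.sum_sub_distrib, ← Finset.mul_sum, Finset.sum_const,
        nsmul_eq_mul, mul_one, ← Finset.sum_div, Finset.card_range]
      ring
    have hσl : σ = (∑ i ∈ Finset.range l, (n i:ℝ)) / lam2 := by
      rw [hσ]; simp only [hc]; rw [← Finset.sum_div]
    rw [← mul_inv]
    congr 1
    rw [htake, hddsum, hw, hσl]
    push_cast
    have hsumC : ((∑ i ∈ Finset.range j, (n i:ℝ) : ℝ):ℂ) + ((∑ i ∈ Finset.Ico j l, (n i:ℝ) : ℝ):ℂ)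
        = ((∑ i ∈ Finset.range l, (n i:ℝ) : ℝ):ℂ) := by
      rw [← Complex.ofReal_add, hsum]
    have hne1 : (lam1:ℂ) ≠ 0 := by exact_mod_cast h1.ne'
    have hne2 : (lam2:ℂ) ≠ 0 := by exact_mod_cast h2.ne'
    have hsumC2 : (∑ x ∈ Finset.range j, (n x : ℂ)) + ∑ x ∈ Finset.Ico j l, (n x : ℂ)
        = ∑ x ∈ Finset.range l, (n x : ℂ) := by exact_mod_cast hsum
    field_simp
    linear_combination (-(lam1:ℂ)) * hsumC2
  rw [Finset.prod_congr rfl hfac, Finset.prod_mul_distrib, Finset.prod_const,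
    Finset.card_range]
  have hgen : ∀ P : ℂ, (lam1:ℂ) * ((lam1:ℂ)⁻¹ ^ (l+1) * P) = (lam1:ℂ)⁻¹ ^ l * P := by
    intro P
    have hne : (lam1:ℂ) ≠ 0 := by exact_mod_cast h1.ne'
    rw [pow_succ, show (lam1:ℂ) * ((lam1:ℂ)⁻¹ ^ l * (lam1:ℂ)⁻¹ * P)
      = ((lam1:ℂ) * (lam1:ℂ)⁻¹) * ((lam1:ℂ)⁻¹ ^ l * P) from by ring, mul_inv_cancel₀ hne,
      one_mul]
  exact hgen _
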